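/- Let φ : ℝⁿ → ℝⁿ be twice continuously differentiable with Dφ(x) invertible for every x ∈ ℝⁿ, and set M(x) = ((Dφ(x))⁻¹)ᵀ. Then for every twice continuously differentiable f : ℝⁿ → ℝ and every x ∈ ℝⁿ one has (Δf)(φ(x)) = Σ_{i,j,l=1}^{n} M_{ij}(x) ∂_j ( M_{il} ∂_l (f ∘ φ) )(x), where Δ denotes the Laplace operator and ∂_j the j-th partial derivative. -/

import Mathlib

open Function Matrix

/-- The `j`-th partial derivative of `g : ℝⁿ → ℝ`. -/
noncomputable def partialDeriv' {n : ℕ} (j : Fin n)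
    (g : EuclideanSpace ℝ (Fin n) → ℝ) : EuclideanSpace ℝ (Fin n) → ℝ :=
  fun x => fderiv ℝ g x (EuclideanSpace.single j 1)

/-- The Laplacian `Δg = ∑ i ∂ᵢ∂ᵢ g` of `g : ℝⁿ → ℝ`. -/
noncomputable def laplacian' {n : ℕ} (g : EuclideanSpace ℝ (Fin n) → ℝ) :
    EuclideanSpace ℝ (Fin n) → ℝ :=
  fun x => ∑ i, partialDeriv' i (partialDeriv' i g) x

/-- The Jacobian matrix `(Dφ(x))_{ij} = ∂ⱼφᵢ(x)` of `φ : ℝⁿ → ℝⁿ` at `x`. -/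
noncomputable def jacobianMatrix {n : ℕ}
    (φ : EuclideanSpace ℝ (Fin n) → EuclideanSpace ℝ (Fin n))
    (x : EuclideanSpace ℝ (Fin n)) : Matrix (Fin n) (Fin n) ℝ :=
  Matrix.of fun i j => fderiv ℝ φ x (EuclideanSpace.single j 1) i

section Auxiliary

variable {n : ℕ}

lemma euclidean_decomp (v : EuclideanSpace ℝ (Fin n)) :
    v = ∑ k, v k • EuclideanSpace.single k (1:ℝ) := by
  have h := (EuclideanSpace.basisFun (Fin n) ℝ).sum_repr v
  simp only [EuclideanSpace.basisFun_repr, EuclideanSpace.basisFun_apply] at h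
  exact h.symm

lemma clm_apply_eq_sum (L : EuclideanSpace ℝ (Fin n) →L[ℝ] ℝ)
    (v : EuclideanSpace ℝ (Fin n)) :
    L v = ∑ k, v k * L (EuclideanSpace.single k (1:ℝ)) := by
  conv_lhs => rw [euclidean_decomp v]
  rw [map_sum]
  simp [smul_eq_mul]

lemma partial_comp {φ : EuclideanSpace ℝ (Fin n) → EuclideanSpace ℝ (Fin n)}
    {g : EuclideanSpace ℝ (Fin n) → ℝ} {y : EuclideanSpace ℝ (Fin n)}
    (hφ : DifferentiableAt ℝ φ y) (hg : DifferentiableAt ℝ g (φ y)) (l : Fin n) :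
    partialDeriv' l (g ∘ φ) y = ∑ k, jacobianMatrix φ y k l * partialDeriv' k g (φ y) := by
  unfold partialDeriv'
  rw [fderiv_comp y hg hφ, ContinuousLinearMap.comp_apply,
    clm_apply_eq_sum (fderiv ℝ g (φ y))]
  rfl

lemma sum_inv_mul (A : Matrix (Fin n) (Fin n) ℝ) (hA : IsUnit A) (c : Fin n → ℝ) (i : Fin n) :
    ∑ j, (A⁻¹)ᵀ i j * (∑ k, A k j * c k) = c i := by
  have hdet := (Matrix.isUnit_iff_isUnit_det A).1 hA
  have h1 : A * A⁻¹ = 1 := Matrix.mul_nonsing_inv A hdet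
  have key : ∀ k, ∑ j, A k j * A⁻¹ j i = (1 : Matrix (Fin n) (Fin n) ℝ) k i := by
    intro k; rw [← Matrix.mul_apply, h1]
  calc ∑ j, (A⁻¹)ᵀ i j * (∑ k, A k j * c k)
      = ∑ k, (∑ j, A k j * A⁻¹ j i) * c k := by
        simp_rw [Finset.mul_sum]
        rw [Finset.sum_comm]
        simp_rw [Finset.sum_mul, Matrix.transpose_apply]
        exact Finset.sum_congr rfl fun k _ => Finset.sum_congr rfl fun j _ => by ring
    _ = c i := by simp [key, Matrix.one_apply]

lemma contDiff_matrix_det (A : EuclideanSpace ℝ (Fin n) → Matrix (Fin n) (Fin n) ℝ)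
    (h : ∀ i j, ContDiff ℝ 1 fun y => A y i j) :
    ContDiff ℝ 1 fun y => (A y).det := by
  simp_rw [Matrix.det_apply']
  exact ContDiff.sum fun σ _ => contDiff_const.mul (contDiff_prod fun i _ => h (σ i) i)

lemma contDiff_adj (A : EuclideanSpace ℝ (Fin n) → Matrix (Fin n) (Fin n) ℝ)
    (h : ∀ i j, ContDiff ℝ 1 fun y => A y i j) (l i : Fin n) :
    ContDiff ℝ 1 fun y => (A y).adjugate l i := by
  simp_rw [Matrix.adjugate_apply]
  apply contDiff_matrix_det
  intro a b
  simp only [Matrix.updateRow_apply]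
  split_ifs with hcond
  · exact contDiff_const
  · exact h a b

lemma contDiff_jac {φ : EuclideanSpace ℝ (Fin n) → EuclideanSpace ℝ (Fin n)}
    (hφ : ContDiff ℝ 2 φ) (k l : Fin n) :
    ContDiff ℝ 1 fun y => jacobianMatrix φ y k l := by
  have h1 : ContDiff ℝ 1 (fderiv ℝ φ) := hφ.fderiv_right (by norm_num)
  exact (EuclideanSpace.proj k).contDiff.comp
    (((ContinuousLinearMap.apply ℝ (EuclideanSpace ℝ (Fin n))
      (EuclideanSpace.single l 1)).contDiff).comp h1)

lemma contDiff_pd {g : EuclideanSpace ℝ (Fin n) → ℝ} (hg : ContDiff ℝ 2 g) (i : Fin n) :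
    ContDiff ℝ 1 (partialDeriv' i g) := by
  have h1 : ContDiff ℝ 1 (fderiv ℝ g) := hg.fderiv_right (by norm_num)
  exact ((ContinuousLinearMap.apply ℝ ℝ (EuclideanSpace.single i 1)).contDiff).comp h1

lemma diffAt_inv_entry {φ : EuclideanSpace ℝ (Fin n) → EuclideanSpace ℝ (Fin n)}
    (hφ : ContDiff ℝ 2 φ) {x : EuclideanSpace ℝ (Fin n)}
    (hx : (jacobianMatrix φ x).det ≠ 0) (i l : Fin n) :
    DifferentiableAt ℝ (fun y => ((jacobianMatrix φ y)⁻¹)ᵀ i l) x := by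
  have hfun : (fun y => ((jacobianMatrix φ y)⁻¹)ᵀ i l)
      = fun y => ((jacobianMatrix φ y).det)⁻¹ * (jacobianMatrix φ y).adjugate l i := by
    funext y
    rw [Matrix.transpose_apply, Matrix.inv_def, Matrix.smul_apply, Ring.inverse_eq_inv,
      smul_eq_mul]
  rw [hfun]
  have hdet := contDiff_matrix_det _ (contDiff_jac hφ)
  have hadj := contDiff_adj _ (contDiff_jac hφ) l i
  exact (((hdet.differentiable one_ne_zero) x).inv hx).mul ((hadj.differentiable one_ne_zero) x)

end Auxiliary

/-- Transformation identity for the Laplacian under a `C²` map `φ` with everywhere invertible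
derivative: with `M(x) = ((Dφ(x))⁻¹)ᵀ`, one has
`(Δf)(φ(x)) = ∑_{i,j,l} M_{ij}(x) ∂ⱼ(M_{il} ∂ₗ(f ∘ φ))(x)` for every `C²` function `f`. -/
theorem laplacian_pullback_formula
    {n : ℕ} (φ : EuclideanSpace ℝ (Fin n) → EuclideanSpace ℝ (Fin n))
    (hφ : ContDiff ℝ 2 φ)
    (hinv : ∀ x, IsUnit (jacobianMatrix φ x))
    (f : EuclideanSpace ℝ (Fin n) → ℝ) (hf : ContDiff ℝ 2 f)
    (x : EuclideanSpace ℝ (Fin n)) :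
    laplacian' f (φ x) =
      ∑ i, ∑ j, ∑ l,
        ((jacobianMatrix φ x)⁻¹)ᵀ i j *
          partialDeriv' j
            (fun y => ((jacobianMatrix φ y)⁻¹)ᵀ i l * partialDeriv' l (f ∘ φ) y) x := by
  classical
  have hφ1 : Differentiable ℝ φ := hφ.differentiable (by norm_num)
  have hf1 : Differentiable ℝ f := hf.differentiable (by norm_num)
  have hfφ : ContDiff ℝ 2 (f ∘ φ) := hf.comp hφ
  have hdetne : ∀ y, (jacobianMatrix φ y).det ≠ 0 := fun y =>
    ((Matrix.isUnit_iff_isUnit_det _).1 (hinv y)).ne_zero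
  -- Step 1: the inner sum over `l` collapses to `∂ᵢf ∘ φ`.
  have hC : ∀ (i : Fin n) (y : EuclideanSpace ℝ (Fin n)),
      (∑ l, ((jacobianMatrix φ y)⁻¹)ᵀ i l * partialDeriv' l (f ∘ φ) y)
        = partialDeriv' i f (φ y) := by
    intro i y
    have hcr : ∀ l, partialDeriv' l (f ∘ φ) y
        = ∑ k, jacobianMatrix φ y k l * partialDeriv' k f (φ y) :=
      fun l => partial_comp (hφ1 y) (hf1 (φ y)) l
    simp_rw [hcr]
    exact sum_inv_mul _ (hinv y) _ i
  -- Differentiability of each summand.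
  have hterm : ∀ (i l : Fin n),
      DifferentiableAt ℝ
        (fun y => ((jacobianMatrix φ y)⁻¹)ᵀ i l * partialDeriv' l (f ∘ φ) y) x :=
    fun i l => (diffAt_inv_entry hφ (hdetne x) i l).mul
      (((contDiff_pd hfφ l).differentiable one_ne_zero) x)
  -- Step 2: exchange `∂ⱼ` with the sum over `l`.
  have hD : ∀ i j : Fin n, (∑ l, partialDeriv' j
        (fun y => ((jacobianMatrix φ y)⁻¹)ᵀ i l * partialDeriv' l (f ∘ φ) y) x)
      = partialDeriv' j ((partialDeriv' i f) ∘ φ) x := by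
    intro i j
    have hsum := fderiv_sum (u := Finset.univ)
      (A := fun l (y : EuclideanSpace ℝ (Fin n)) =>
        ((jacobianMatrix φ y)⁻¹)ᵀ i l * partialDeriv' l (f ∘ φ) y)
      (x := x) (fun l _ => hterm i l)
    have hfuneq : (fun y => ∑ l, ((jacobianMatrix φ y)⁻¹)ᵀ i l * partialDeriv' l (f ∘ φ) y)
        = (partialDeriv' i f) ∘ φ := funext fun y => hC i y
    calc (∑ l, partialDeriv' j
          (fun y => ((jacobianMatrix φ y)⁻¹)ᵀ i l * partialDeriv' l (f ∘ φ) y) x)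
        = (∑ l, fderiv ℝ
            (fun y => ((jacobianMatrix φ y)⁻¹)ᵀ i l * partialDeriv' l (f ∘ φ) y) x)
            (EuclideanSpace.single j 1) := by
          rw [ContinuousLinearMap.sum_apply]; rfl
      _ = fderiv ℝ
            (fun y => ∑ l, ((jacobianMatrix φ y)⁻¹)ᵀ i l * partialDeriv' l (f ∘ φ) y) x
            (EuclideanSpace.single j 1) := by rw [Finset.sum_fn] at hsum; rw [hsum]
      _ = partialDeriv' j ((partialDeriv' i f) ∘ φ) x := by rw [hfuneq]; rfl
  -- Step 3: the sum over `j` collapses to the second partial derivatives of `f`.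
  have hE : ∀ i : Fin n,
      (∑ j, ((jacobianMatrix φ x)⁻¹)ᵀ i j * partialDeriv' j ((partialDeriv' i f) ∘ φ) x)
        = partialDeriv' i (partialDeriv' i f) (φ x) := by
    intro i
    have hcr : ∀ j, partialDeriv' j ((partialDeriv' i f) ∘ φ) x
        = ∑ k, jacobianMatrix φ x k j * partialDeriv' k (partialDeriv' i f) (φ x) :=
      fun j => partial_comp (hφ1 x) (((contDiff_pd hf i).differentiable one_ne_zero) (φ x)) j
    simp_rw [hcr]
    exact sum_inv_mul _ (hinv x) _ i
  calc laplacian' f (φ x) = ∑ i, partialDeriv' i (partialDeriv' i f) (φ x) := rfl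
    _ = ∑ i, ∑ j, ((jacobianMatrix φ x)⁻¹)ᵀ i j *
          partialDeriv' j ((partialDeriv' i f) ∘ φ) x := by
        exact Finset.sum_congr rfl fun i _ => (hE i).symm
    _ = ∑ i, ∑ j, ∑ l,
        ((jacobianMatrix φ x)⁻¹)ᵀ i j *
          partialDeriv' j
            (fun y => ((jacobianMatrix φ y)⁻¹)ᵀ i l * partialDeriv' l (f ∘ φ) y) x := by
        refine Finset.sum_congr rfl fun i _ => Finset.sum_congr rfl fun j _ => ?_
        rw [← Finset.mul_sum, hD i j]
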